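/- Let v, θ > 0 and let κ : ℝ → ℝ be continuous with κ(ζ) → ±κ∞ as ζ → ±∞, where κ∞ > 0. Define α(ζ) = e^{−(θ/v)∫₀^ζ κ(s) ds} · (1, −i)ᵀ ∈ ℂ². Then α is a solution of the Dirac equation −i v σ₃ α'(ζ) + θ κ(ζ) σ₁ α(ζ) = 0, and each component of α is square-integrable on ℝ. -/

import Mathlib

open MeasureTheory Complex Filter

theorem dirac_zero_mode
    (v θ : ℝ) (hv : 0 < v) (hθ : 0 < θ)
    (κ : ℝ → ℝ) (hκcont : Continuous κ)
    (κinf : ℝ) (hκinf : 0 < κinf)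
    (hplus : Tendsto κ atTop (nhds κinf)) (hminus : Tendsto κ atBot (nhds (-κinf))) :
    let A : ℝ → ℝ := fun ζ => Real.exp (-(θ / v) * ∫ s in (0 : ℝ)..ζ, κ s)
    let α₁ : ℝ → ℂ := fun ζ => (A ζ : ℂ)
    let α₂ : ℝ → ℂ := fun ζ => -Complex.I * (A ζ : ℂ)
    (∀ ζ : ℝ,
      -Complex.I * (v : ℂ) * deriv α₁ ζ + (θ : ℂ) * (κ ζ : ℂ) * α₂ ζ = 0 ∧
      Complex.I * (v : ℂ) * deriv α₂ ζ + (θ : ℂ) * (κ ζ : ℂ) * α₁ ζ = 0) ∧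
    MemLp α₁ 2 volume ∧ MemLp α₂ 2 volume := by
  intro A α₁ α₂
  set F : ℝ → ℝ := fun ζ => ∫ s in (0 : ℝ)..ζ, κ s with hF
  have hFderiv : ∀ ζ, HasDerivAt F (κ ζ) ζ := fun ζ =>
    intervalIntegral.integral_hasDerivAt_right (hκcont.intervalIntegrable 0 ζ)
      hκcont.stronglyMeasurable.stronglyMeasurableAtFilter hκcont.continuousAt
  have hAderiv : ∀ ζ, HasDerivAt A (A ζ * (-(θ / v) * κ ζ)) ζ := by
    intro ζ
    have h1 : HasDerivAt (fun ζ => -(θ / v) * F ζ) (-(θ / v) * κ ζ) ζ :=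
      (hFderiv ζ).const_mul _
    simpa [A, F, Function.comp_def, mul_comm] using (Real.hasDerivAt_exp (-(θ / v) * F ζ)).comp ζ h1
  have hα₁deriv : ∀ ζ, HasDerivAt α₁ ((A ζ * (-(θ / v) * κ ζ) : ℝ) : ℂ) ζ :=
    fun ζ => (hAderiv ζ).ofReal_comp
  have hα₂deriv : ∀ ζ, HasDerivAt α₂ (-Complex.I * ((A ζ * (-(θ / v) * κ ζ) : ℝ) : ℂ)) ζ :=
    fun ζ => (hα₁deriv ζ).const_mul _
  have hvc : (v : ℂ) ≠ 0 := by exact_mod_cast hv.ne'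
  refine ⟨fun ζ => ?_, ?_⟩
  · constructor
    · rw [(hα₁deriv ζ).deriv]
      show -Complex.I * (v : ℂ) * ((A ζ * (-(θ / v) * κ ζ) : ℝ) : ℂ)
          + (θ : ℂ) * (κ ζ : ℂ) * (-Complex.I * (A ζ : ℂ)) = 0
      push_cast
      field_simp
      ring
    · rw [(hα₂deriv ζ).deriv]
      show Complex.I * (v : ℂ) * (-Complex.I * ((A ζ * (-(θ / v) * κ ζ) : ℝ) : ℂ))
          + (θ : ℂ) * (κ ζ : ℂ) * ((A ζ : ℂ)) = 0
      push_cast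
      field_simp
      ring_nf
      rw [Complex.I_sq]
      ring
  · -- Memℒp
    have hFcont : Continuous F := by
      rw [continuous_iff_continuousAt]; exact fun ζ => (hFderiv ζ).continuousAt
    have hAcont : Continuous A := Real.continuous_exp.comp (continuous_const.mul hFcont)
    set B : ℝ → ℝ := fun ζ => Real.exp (-(2 * (θ / v)) * F ζ) with hBdef
    have hBcont : Continuous B := Real.continuous_exp.comp (continuous_const.mul hFcont)
    have hAB : ∀ ζ, A ζ ^ 2 = B ζ := by
      intro ζ
      show Real.exp (-(θ / v) * F ζ) ^ 2 = Real.exp (-(2 * (θ / v)) * F ζ)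
      rw [sq, ← Real.exp_add]; ring_nf
    set c : ℝ := θ / v * κinf with hcdef
    have hc : 0 < c := mul_pos (div_pos hθ hv) hκinf
    obtain ⟨R, hR⟩ : ∃ R, ∀ ζ ≥ R, κinf / 2 ≤ κ ζ :=
      eventually_atTop.mp (hplus.eventually (eventually_ge_nhds (by linarith)))
    obtain ⟨R', hR'⟩ : ∃ R', ∀ ζ ≤ R', κ ζ ≤ -(κinf / 2) :=
      eventually_atBot.mp (hminus.eventually (eventually_le_nhds (by linarith)))
    set L : ℝ := min R R' with hLdef
    set U : ℝ := max R R' with hUdef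
    have hLU : L ≤ U := le_trans (min_le_left _ _) (le_max_left _ _)
    have hFsplit : ∀ a ζ : ℝ, F ζ = F a + ∫ s in a..ζ, κ s := by
      intro a ζ
      have := intervalIntegral.integral_add_adjacent_intervals (μ := volume)
        (hκcont.intervalIntegrable 0 a) (hκcont.intervalIntegrable a ζ)
      simp only [F]; linarith [this]
    -- upper bound on Ioi U
    have hhi : ∀ ζ ∈ Set.Ioi U, B ζ ≤ Real.exp (-(2 * (θ / v)) * F U + c * U) * Real.exp (-c * ζ) := by
      intro ζ hζ
      have hζU : U ≤ ζ := le_of_lt hζ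
      have hint : κinf / 2 * (ζ - U) ≤ ∫ s in U..ζ, κ s := by
        have h1 : (∫ s in U..ζ, (κinf / 2 : ℝ)) ≤ ∫ s in U..ζ, κ s :=
          intervalIntegral.integral_mono_on hζU (intervalIntegrable_const)
            (hκcont.intervalIntegrable _ _)
            (fun x hx => hR x (le_trans (le_max_left _ _) hx.1))
        rwa [intervalIntegral.integral_const, smul_eq_mul, mul_comm] at h1
      have hFζ : F U + κinf / 2 * (ζ - U) ≤ F ζ := by
        rw [hFsplit U ζ]; linarith
      rw [← Real.exp_add]
      apply Real.exp_le_exp.2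
      have hcoef : 0 < 2 * (θ / v) := by positivity
      nlinarith [hFζ, hcoef]
    have hIhi : IntegrableOn B (Set.Ioi U) := by
      apply Integrable.mono' (((exp_neg_integrableOn_Ioi U hc)).const_mul
        (Real.exp (-(2 * (θ / v)) * F U + c * U)))
      · exact hBcont.aestronglyMeasurable.restrict
      · refine (ae_restrict_iff' measurableSet_Ioi).2 (Filter.Eventually.of_forall ?_)
        intro ζ hζ
        rw [Real.norm_eq_abs, abs_of_pos (Real.exp_pos _)]
        exact hhi ζ hζ
    -- lower bound on Iio L
    have hlo : ∀ ζ ∈ Set.Ioi (-L), B (-ζ) ≤ Real.exp (-(2 * (θ / v)) * F L - c * L) * Real.exp (-c * ζ) := by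
      intro ζ hζ
      have hζL : -ζ ≤ L := by simpa using neg_le_neg (le_of_lt (Set.mem_Ioi.mp hζ))
      have hint : (∫ s in (-ζ)..L, κ s) ≤ -(κinf / 2) * (L - (-ζ)) := by
        have h1 : (∫ s in (-ζ)..L, κ s) ≤ ∫ s in (-ζ)..L, (-(κinf / 2) : ℝ) :=
          intervalIntegral.integral_mono_on hζL (hκcont.intervalIntegrable _ _)
            (intervalIntegrable_const)
            (fun x hx => hR' x (le_trans hx.2 (min_le_right _ _)))
        rwa [intervalIntegral.integral_const, smul_eq_mul, mul_comm] at h1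
      have hFζ : F L + κinf / 2 * (L - (-ζ)) ≤ F (-ζ) := by
        have := hFsplit (-ζ) L
        linarith
      rw [← Real.exp_add]
      apply Real.exp_le_exp.2
      have hcoef : 0 < 2 * (θ / v) := by positivity
      nlinarith [hFζ, hcoef]
    have hIlo : IntegrableOn B (Set.Iio L) := by
      rw [← (Measure.measurePreserving_neg (volume : Measure ℝ)).integrableOn_comp_preimage
          (Homeomorph.neg ℝ).measurableEmbedding]
      simp only [Function.comp_def, Set.neg_preimage, Set.neg_Iio]
      apply Integrable.mono' (((exp_neg_integrableOn_Ioi (-L) hc)).const_mul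
        (Real.exp (-(2 * (θ / v)) * F L - c * L)))
      · exact (hBcont.comp continuous_neg).aestronglyMeasurable.restrict
      · refine (ae_restrict_iff' measurableSet_Ioi).2 (Filter.Eventually.of_forall ?_)
        intro ζ hζ
        rw [Real.norm_eq_abs, abs_of_pos (Real.exp_pos _)]
        exact hlo ζ hζ
    have hImid : IntegrableOn B (Set.Icc L U) := hBcont.integrableOn_Icc
    have hIB : Integrable B := by
      rw [← integrableOn_univ, ← Set.Iio_union_Ici (a := L), integrableOn_union,
        ← Set.Icc_union_Ioi_eq_Ici hLU, integrableOn_union]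
      exact ⟨hIlo, hImid, hIhi⟩
    have hnorm1 : ∀ ζ, ‖α₁ ζ‖ = A ζ := by
      intro ζ
      show ‖((A ζ : ℝ) : ℂ)‖ = A ζ
      rw [Complex.norm_real, Real.norm_eq_abs, abs_of_pos (Real.exp_pos _)]
    have hnorm2 : ∀ ζ, ‖α₂ ζ‖ = A ζ := by
      intro ζ
      show ‖-Complex.I * ((A ζ : ℝ) : ℂ)‖ = A ζ
      rw [norm_mul, norm_neg, Complex.norm_I, one_mul, Complex.norm_real,
        Real.norm_eq_abs, abs_of_pos (Real.exp_pos _)]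
    have hmeasA : Continuous α₁ := Complex.continuous_ofReal.comp hAcont
    constructor
    · refine (memLp_two_iff_integrable_sq_norm hmeasA.aestronglyMeasurable).2 ?_
      refine hIB.congr (Filter.Eventually.of_forall fun ζ => ?_)
      show B ζ = ‖α₁ ζ‖ ^ 2
      rw [hnorm1 ζ, hAB ζ]
    · have hmeasA2 : Continuous α₂ := continuous_const.mul (Complex.continuous_ofReal.comp hAcont)
      refine (memLp_two_iff_integrable_sq_norm hmeasA2.aestronglyMeasurable).2 ?_
      refine hIB.congr (Filter.Eventually.of_forall fun ζ => ?_)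
      show B ζ = ‖α₂ ζ‖ ^ 2
      rw [hnorm2 ζ, hAB ζ]
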